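/- Let E be a real inner product space, W ⊆ E a nonempty set with ‖u − v‖ ≤ D for all u, v ∈ W where D > 0, and P : E → E a map with P(x) ∈ W for all x and ‖P(x) − y‖ ≤ ‖x − y‖ for all x ∈ E and y ∈ W. Let f : E → ℝ, T ≥ 1 a natural number, ε ≥ 0 and G ≥ 0 with G + ε > 0, and set η = D/((G + ε)·√T). Let (w_t), (g_t), (e_t) satisfy w_0 ∈ W and w_{t+1} = P(w_t − η • (g_t + e_t)) for all t < T, where for each t < T: f(y) ≥ f(w_t) + ⟪g_t, y − w_t⟫ for all y ∈ W, ‖g_t‖ ≤ G, and ‖e_t‖ ≤ ε. Then for every w⋆ ∈ W, min_{t < T} (f(w_t) − f(w⋆)) ≤ D(G + ε)/√T + ε·D. -/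
import Mathlib


open scoped RealInnerProductSpace

set_option maxHeartbeats 1600000 in
/-- Convergence rate of Proposition 3: with feasible set `W` of diameter at
most `D > 0`, projection `P` nonexpansive toward points of `W`, subgradients
bounded by `G`, oracle errors bounded by `ε` (with `G + ε > 0`), and the step
size `η = D/((G + ε)√T)`, projected subgradient descent satisfies
`min_{t<T} (f(w_t) − f(w⋆)) ≤ D(G + ε)/√T + ε·D`. -/
theorem projected_subgradient_descent_rate
    {E : Type*} [NormedAddCommGroup E] [InnerProductSpace ℝ E]
    (W : Set E) (hWne : W.Nonempty) (D : ℝ) (hDpos : 0 < D)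
    (hD : ∀ u ∈ W, ∀ v ∈ W, ‖u - v‖ ≤ D)
    (P : E → E) (hPmem : ∀ x : E, P x ∈ W)
    (hPnonexp : ∀ x : E, ∀ y ∈ W, ‖P x - y‖ ≤ ‖x - y‖)
    (f : E → ℝ) (T : ℕ) (hT : 1 ≤ T)
    (ε G : ℝ) (hε : 0 ≤ ε) (hG : 0 ≤ G) (hGε : 0 < G + ε)
    (η : ℝ) (hη : η = D / ((G + ε) * Real.sqrt T))
    (w g e : ℕ → E) (hw0 : w 0 ∈ W)
    (hrec : ∀ t < T, w (t + 1) = P (w t - η • (g t + e t)))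
    (hsub : ∀ t < T, ∀ y ∈ W, f y ≥ f (w t) + ⟪g t, y - w t⟫)
    (hgB : ∀ t < T, ‖g t‖ ≤ G)
    (heB : ∀ t < T, ‖e t‖ ≤ ε) :
    ∀ wstar ∈ W,
      (Finset.range T).inf' (Finset.nonempty_range_iff.mpr (by omega))
          (fun t => f (w t) - f wstar)
        ≤ D * (G + ε) / Real.sqrt T + ε * D := by
  intro wstar hwstar
  have hT0 : (0:ℝ) < (T:ℝ) := by exact_mod_cast Nat.lt_of_lt_of_le Nat.zero_lt_one hT
  set s := Real.sqrt (T:ℝ) with hs_def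
  have hs : 0 < s := Real.sqrt_pos.mpr hT0
  have hs2 : s ^ 2 = (T:ℝ) := Real.sq_sqrt hT0.le
  have hηpos : 0 < η := by rw [hη]; positivity
  have h2η : (0:ℝ) < 2 * η := by linarith
  clear_value s
  -- membership
  have hmem : ∀ t, t ≤ T → w t ∈ W := by
    intro t
    induction t with
    | zero => intro _; exact hw0
    | succ n ih =>
      intro h
      rw [hrec n (by omega)]
      exact hPmem _
  set C : ℝ := η * (G + ε) ^ 2 / 2 + ε * D with hC
  clear_value C
  set a : ℕ → ℝ := fun t => ‖w t - wstar‖ ^ 2 with ha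
  clear_value a
  -- per-step inequality
  have key : ∀ t < T, f (w t) - f wstar ≤ (a t - a (t + 1)) / (2 * η) + C := by
    intro t ht
    have hwt : w t ∈ W := hmem t ht.le
    have hdist : ‖w t - wstar‖ ≤ D := hD _ hwt _ hwstar
    have h1 : ‖w (t + 1) - wstar‖ ≤ ‖(w t - wstar) - η • (g t + e t)‖ := by
      rw [hrec t ht]
      have := hPnonexp (w t - η • (g t + e t)) wstar hwstar
      calc ‖P (w t - η • (g t + e t)) - wstar‖ ≤ ‖w t - η • (g t + e t) - wstar‖ := this
        _ = ‖(w t - wstar) - η • (g t + e t)‖ := by rw [sub_right_comm]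
    have h2 : ‖w (t + 1) - wstar‖ ^ 2 ≤ ‖(w t - wstar) - η • (g t + e t)‖ ^ 2 :=
      pow_le_pow_left₀ (norm_nonneg _) h1 2
    have hexp : ‖(w t - wstar) - η • (g t + e t)‖ ^ 2
        = ‖w t - wstar‖ ^ 2 - 2 * η * ⟪g t + e t, w t - wstar⟫
          + η ^ 2 * ‖g t + e t‖ ^ 2 := by
      rw [norm_sub_sq_real, real_inner_smul_right, norm_smul,
        real_inner_comm, mul_pow, Real.norm_eq_abs, sq_abs]
      ring
    have hsplit : ⟪g t + e t, w t - wstar⟫ = ⟪g t, w t - wstar⟫ + ⟪e t, w t - wstar⟫ := by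
      exact inner_add_left _ _ _
    have hgi : f (w t) - f wstar ≤ ⟪g t, w t - wstar⟫ := by
      have h3 := hsub t ht wstar hwstar
      have h4 : ⟪g t, wstar - w t⟫ = -⟪g t, w t - wstar⟫ := by
        rw [← inner_neg_right]; congr 1; abel
      rw [h4] at h3
      linarith
    have hei : -(ε * D) ≤ ⟪e t, w t - wstar⟫ := by
      have h5 := abs_real_inner_le_norm (e t) (w t - wstar)
      have h6 : ‖e t‖ * ‖w t - wstar‖ ≤ ε * D :=
        mul_le_mul (heB t ht) hdist (norm_nonneg _) hε
      have h7 := neg_abs_le ⟪e t, w t - wstar⟫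
      linarith
    have hz : ‖g t + e t‖ ≤ G + ε := by
      calc ‖g t + e t‖ ≤ ‖g t‖ + ‖e t‖ := norm_add_le _ _
        _ ≤ G + ε := add_le_add (hgB t ht) (heB t ht)
    have hz2 : ‖g t + e t‖ ^ 2 ≤ (G + ε) ^ 2 := pow_le_pow_left₀ (norm_nonneg _) hz 2
    have hinner : f (w t) - f wstar - ε * D ≤ ⟪g t + e t, w t - wstar⟫ := by
      rw [hsplit]; linarith
    have hmain : a (t + 1) ≤ a t - 2 * η * (f (w t) - f wstar - ε * D)
        + η ^ 2 * (G + ε) ^ 2 := by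
      have hp1 : 2 * η * (f (w t) - f wstar - ε * D) ≤ 2 * η * ⟪g t + e t, w t - wstar⟫ :=
        mul_le_mul_of_nonneg_left hinner h2η.le
      have hp2 : η ^ 2 * ‖g t + e t‖ ^ 2 ≤ η ^ 2 * (G + ε) ^ 2 :=
        mul_le_mul_of_nonneg_left hz2 (sq_nonneg η)
      simp only [ha]
      nlinarith [h2, hexp]
    have : f (w t) - f wstar - C ≤ (a t - a (t + 1)) / (2 * η) := by
      rw [le_div_iff₀ h2η, hC]
      have hd : η * (G + ε) ^ 2 / 2 * (2 * η) = η ^ 2 * (G + ε) ^ 2 := by ring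
      nlinarith [hmain]
    linarith
  -- bound minimum by average
  set M : ℝ := (Finset.range T).inf' (Finset.nonempty_range_iff.mpr (by omega))
      (fun t => f (w t) - f wstar) with hM
  have hMle : ∀ t ∈ Finset.range T, M ≤ f (w t) - f wstar :=
    fun t ht => Finset.inf'_le _ ht
  clear_value M
  have hcard : (Finset.range T).card • M ≤ ∑ t ∈ Finset.range T, (f (w t) - f wstar) :=
    Finset.card_nsmul_le_sum _ _ _ hMle
  rw [Finset.card_range, nsmul_eq_mul] at hcard
  have hsum1 : ∑ t ∈ Finset.range T, (f (w t) - f wstar)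
      ≤ ∑ t ∈ Finset.range T, ((a t - a (t + 1)) / (2 * η) + C) :=
    Finset.sum_le_sum fun t ht => key t (Finset.mem_range.mp ht)
  have hsum2 : ∑ t ∈ Finset.range T, ((a t - a (t + 1)) / (2 * η) + C)
      = (a 0 - a T) / (2 * η) + (T:ℝ) * C := by
    rw [Finset.sum_add_distrib, ← Finset.sum_div, Finset.sum_range_sub' a,
      Finset.sum_const, Finset.card_range, nsmul_eq_mul]
  have ha0 : a 0 ≤ D ^ 2 := by
    have := hD _ hw0 _ hwstar
    simpa only [ha] using pow_le_pow_left₀ (norm_nonneg _) this 2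
  have haT : 0 ≤ a T := by rw [ha]; positivity
  have hup : (T:ℝ) * M ≤ D ^ 2 / (2 * η) + (T:ℝ) * C := by
    have h8 : (a 0 - a T) / (2 * η) ≤ D ^ 2 / (2 * η) := by
      gcongr
      linarith
    rw [hsum2] at hsum1
    linarith
  have hMavg : M ≤ D ^ 2 / (2 * η * (T:ℝ)) + C := by
    rw [mul_comm (2 * η) (T:ℝ), ← div_div]
    have : M - C ≤ (D ^ 2 / (2 * η)) / (T:ℝ) := by
      rw [le_div_iff₀ hT0, sub_mul]
      linarith
    have h9 : (D ^ 2 / (2 * η)) / (T:ℝ) = D ^ 2 / (T:ℝ) / (2 * η) := by ring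
    rw [h9] at this
    linarith
  have heq : D ^ 2 / (2 * η * (T:ℝ)) + C = D * (G + ε) / s + ε * D := by
    rw [hC, hη, ← hs2]
    have hGε' : (G + ε) ≠ 0 := ne_of_gt hGε
    have hs' : s ≠ 0 := ne_of_gt hs
    field_simp
    ring
  rw [heq] at hMavg
  exact hMavg
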